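/- Let S be a symmetric positive definite real n̄×n̄ matrix, τ > 0, Γ ∈ ℝ^{n_ζ×n̄}, M ∈ ℝ^{n_x×n_ζ}, H ∈ ℝ^{m×n_x} with rows h₁ᵀ,…,h_mᵀ, μ ∈ ℝ^{n_x}, b ∈ ℝ^m, μ_d ∈ ℝ^m, and reals c̃, c ≥ 0. Suppose: (i) ‖Hμ − b‖₂ ≥ c̃; (ii) ‖μ_d‖₂ ≤ c̃ − c; and (iii) (μ_d)_{m̄} ≥ √τ · ‖ΓᵀMᵀh_{m̄}‖_{S⁻¹} for every m̄ = 1,…,m. Then the original robust nonconvex norm constraint holds: ‖H(μ + Mζ) − b‖₂ ≥ c for all ζ ∈ U = { Γz : zᵀSz ≤ τ }. -/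

import Mathlib

open Matrix

lemma cs_posdef {n : ℕ} (S : Matrix (Fin n) (Fin n) ℝ) (hS : S.PosDef)
    (a z : Fin n → ℝ) :
    (a ⬝ᵥ z) ^ 2 ≤ (a ⬝ᵥ S⁻¹.mulVec a) * (z ⬝ᵥ S.mulVec z) := by
  have hSt : Sᵀ = S := by
    have := hS.isHermitian
    exact (Matrix.conjTranspose_eq_transpose_of_trivial S).symm.trans this
  set w : Fin n → ℝ := S⁻¹ *ᵥ a with hw
  have hdet : IsUnit S.det := hS.det_pos.ne'.isUnit
  have hSw : S *ᵥ w = a := by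
    rw [hw, mulVec_mulVec, Matrix.mul_nonsing_inv _ hdet, one_mulVec]
  have hwSz : w ⬝ᵥ S *ᵥ z = a ⬝ᵥ z := by
    rw [dotProduct_mulVec, ← mulVec_transpose, hSt, hSw]
  have hzSw : z ⬝ᵥ S *ᵥ w = a ⬝ᵥ z := by
    rw [hSw, dotProduct_comm]
  have hwSw : w ⬝ᵥ S *ᵥ w = a ⬝ᵥ S⁻¹ *ᵥ a := by
    rw [hSw, hw, dotProduct_comm]
  have key : ∀ t : ℝ, 0 ≤ (a ⬝ᵥ S⁻¹ *ᵥ a) * (t * t) + (2 * (a ⬝ᵥ z)) * t +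
      z ⬝ᵥ S *ᵥ z := by
    intro t
    have h0 : 0 ≤ (z + t • w) ⬝ᵥ S *ᵥ (z + t • w) := hS.posSemidef.dotProduct_mulVec_nonneg _
    have hexp : (z + t • w) ⬝ᵥ S *ᵥ (z + t • w) =
        (a ⬝ᵥ S⁻¹ *ᵥ a) * (t * t) + (2 * (a ⬝ᵥ z)) * t + z ⬝ᵥ S *ᵥ z := by
      rw [mulVec_add, mulVec_smul, dotProduct_add, add_dotProduct,
        add_dotProduct, dotProduct_smul, smul_dotProduct, smul_dotProduct,
        dotProduct_smul, hwSz, hzSw, hwSw]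
      ring_nf
    linarith [hexp ▸ h0]
  have hd := discrim_le_zero key
  rw [discrim] at hd
  nlinarith [hd]

/-- The SOCP reformulation implies the original robust nonconvex norm constraint:
if `‖Hμ − b‖₂ ≥ c̃`, `‖μ_d‖₂ ≤ c̃ − c`, and each `(μ_d)_{m̄}` bounds
`√τ·‖ΓᵀMᵀh_{m̄}‖_{S⁻¹}`, then `‖H(μ + Mζ) − b‖₂ ≥ c` for all `ζ ∈ U`. -/
theorem stmt_8 {nζ nbar nx m : ℕ}
    (S : Matrix (Fin nbar) (Fin nbar) ℝ) (hS : S.PosDef)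
    (τ : ℝ) (hτ : 0 < τ)
    (Γ : Matrix (Fin nζ) (Fin nbar) ℝ) (M : Matrix (Fin nx) (Fin nζ) ℝ)
    (H : Matrix (Fin m) (Fin nx) ℝ)
    (μ : Fin nx → ℝ) (b : Fin m → ℝ) (μd : Fin m → ℝ)
    (ctilde c : ℝ) (hctilde : 0 ≤ ctilde) (hc : 0 ≤ c)
    (h1 : Real.sqrt (∑ i, (H.mulVec μ i - b i) ^ 2) ≥ ctilde)
    (h2 : Real.sqrt (∑ mb, (μd mb) ^ 2) ≤ ctilde - c)
    (h3 : ∀ mb : Fin m,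
      Real.sqrt τ * Real.sqrt ((Γᵀ.mulVec (Mᵀ.mulVec (H mb))) ⬝ᵥ
        S⁻¹.mulVec (Γᵀ.mulVec (Mᵀ.mulVec (H mb)))) ≤ μd mb) :
    ∀ z : Fin nbar → ℝ, z ⬝ᵥ S.mulVec z ≤ τ →
      Real.sqrt (∑ i, (H.mulVec (μ + M.mulVec (Γ.mulVec z)) i - b i) ^ 2) ≥ c := by
  intro z hz
  -- pointwise bound: |(H M Γ z) i| ≤ μd i
  set v : Fin m → ℝ := H.mulVec (M.mulVec (Γ.mulVec z)) with hv
  have hC : 0 ≤ z ⬝ᵥ S.mulVec z := hS.posSemidef.dotProduct_mulVec_nonneg z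
  have hpt : ∀ i : Fin m, (v i) ^ 2 ≤ (μd i) ^ 2 := by
    intro i
    set a : Fin nbar → ℝ := Γᵀ.mulVec (Mᵀ.mulVec (H i)) with ha
    have hA : 0 ≤ a ⬝ᵥ S⁻¹.mulVec a := (hS.inv).posSemidef.dotProduct_mulVec_nonneg a
    have hav : a ⬝ᵥ z = v i := by
      rw [ha, hv]
      rw [mulVec_transpose, ← dotProduct_mulVec, mulVec_transpose, ← dotProduct_mulVec]
      rfl
    have hcs := cs_posdef S hS a z
    have hle : (v i) ^ 2 ≤ (a ⬝ᵥ S⁻¹.mulVec a) * τ := by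
      calc (v i) ^ 2 = (a ⬝ᵥ z) ^ 2 := by rw [hav]
        _ ≤ (a ⬝ᵥ S⁻¹.mulVec a) * (z ⬝ᵥ S.mulVec z) := hcs
        _ ≤ (a ⬝ᵥ S⁻¹.mulVec a) * τ := by
            exact mul_le_mul_of_nonneg_left hz hA
    have hsq : Real.sqrt τ * Real.sqrt (a ⬝ᵥ S⁻¹.mulVec a) ≤ μd i := h3 i
    have hnn : 0 ≤ Real.sqrt τ * Real.sqrt (a ⬝ᵥ S⁻¹.mulVec a) :=
      mul_nonneg (Real.sqrt_nonneg _) (Real.sqrt_nonneg _)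
    have hsqsq : (Real.sqrt τ * Real.sqrt (a ⬝ᵥ S⁻¹.mulVec a)) ^ 2 =
        τ * (a ⬝ᵥ S⁻¹.mulVec a) := by
      rw [mul_pow, Real.sq_sqrt hτ.le, Real.sq_sqrt hA]
    nlinarith [sq_nonneg (Real.sqrt τ * Real.sqrt (a ⬝ᵥ S⁻¹.mulVec a))]
  -- euclidean norms
  have hsum : ∑ i, (v i) ^ 2 ≤ ∑ i, (μd i) ^ 2 :=
    Finset.sum_le_sum fun i _ => hpt i
  have hvnorm : Real.sqrt (∑ i, (v i) ^ 2) ≤ ctilde - c :=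
    le_trans (Real.sqrt_le_sqrt hsum) h2
  -- reverse triangle inequality via sqrt sums
  set u : Fin m → ℝ := fun i => H.mulVec μ i - b i with hu
  have hgoal_eq : ∀ i, H.mulVec (μ + M.mulVec (Γ.mulVec z)) i - b i = u i + v i := by
    intro i
    rw [hu, hv]
    simp [Matrix.mulVec_add]
    ring
  have tri : Real.sqrt (∑ i, (u i) ^ 2) ≤
      Real.sqrt (∑ i, (u i + v i) ^ 2) + Real.sqrt (∑ i, (v i) ^ 2) := by
    have key : ∀ x y : Fin m → ℝ, Real.sqrt (∑ i, (x i + y i) ^ 2) ≤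
        Real.sqrt (∑ i, (x i) ^ 2) + Real.sqrt (∑ i, (y i) ^ 2) := by
      intro x y
      have hnx : ‖(WithLp.equiv 2 (Fin m → ℝ)).symm x‖ = Real.sqrt (∑ i, (x i) ^ 2) := by
        rw [EuclideanSpace.norm_eq]; congr 1; apply Finset.sum_congr rfl; intro i _
        simp [Real.norm_eq_abs, sq_abs]
      have hny : ‖(WithLp.equiv 2 (Fin m → ℝ)).symm y‖ = Real.sqrt (∑ i, (y i) ^ 2) := by
        rw [EuclideanSpace.norm_eq]; congr 1; apply Finset.sum_congr rfl; intro i _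
        simp [Real.norm_eq_abs, sq_abs]
      have hnxy : ‖(WithLp.equiv 2 (Fin m → ℝ)).symm x + (WithLp.equiv 2 (Fin m → ℝ)).symm y‖
          = Real.sqrt (∑ i, (x i + y i) ^ 2) := by
        rw [EuclideanSpace.norm_eq]; congr 1; apply Finset.sum_congr rfl; intro i _
        simp [Real.norm_eq_abs, sq_abs, WithLp.equiv_symm_apply, PiLp.toLp_apply]
      calc Real.sqrt (∑ i, (x i + y i) ^ 2) = _ := hnxy.symm
        _ ≤ _ := norm_add_le _ _
        _ = _ := by rw [hnx, hny]
    have := key (fun i => u i + v i) (fun i => - v i)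
    simpa [neg_sq] using this
  have : c ≤ Real.sqrt (∑ i, (u i + v i) ^ 2) := by
    have h1' : ctilde ≤ Real.sqrt (∑ i, (u i) ^ 2) := h1
    linarith
  calc c ≤ Real.sqrt (∑ i, (u i + v i) ^ 2) := this
    _ = Real.sqrt (∑ i, (H.mulVec (μ + M.mulVec (Γ.mulVec z)) i - b i) ^ 2) := by
        congr 1; apply Finset.sum_congr rfl; intro i _; rw [hgoal_eq i]
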